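/- Assume r*(0) = 1, h*(0) = 1, r* is differentiable at 0 with r*'(0) = −1/γ, h* is differentiable at 0 with h*'(0) = −(1/μ1 + 1/μ2), λ·(1+α/γ)·(1/μ1+1/μ2) ≠ 1, h*(φ(z)) ≠ z for all z in some left neighborhood of 1, and P(z) → 1 as z → 1⁻. Then the idle probability satisfies p0 = 1 − λ·(1 + α/γ)·(1/μ1 + 1/μ2). -/

import Mathlib

open scoped BigOperators

open Filter Topology

/-- The idle probability of the unreliable two-node M/G/1 tandem queue (paper's
equation (16) and the following remark): from the PGF of the system size
`P(z) = h*(φ(z))·(1−z)·p0 / (h*(φ(z)) − z)` with `φ(z) = λ(1−z) + α − α·r*(λ(1−z))`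
and `P(z) → 1` as `z → 1⁻`, one obtains `p0 = 1 − λ·(1+α/γ)·(1/μ1+1/μ2)`. -/
theorem stmt_7
    (lam mu1 mu2 alpha gam : ℝ)
    (hlam : 0 < lam) (hmu1 : 0 < mu1) (hmu2 : 0 < mu2)
    (halpha : 0 < alpha) (hgam : 0 < gam)
    (p0 : ℝ) (rstar hstar : ℝ → ℝ)
    (hr0 : rstar 0 = 1) (hh0 : hstar 0 = 1)
    (hr' : HasDerivAt rstar (-(1 / gam)) 0)
    (hh' : HasDerivAt hstar (-(1 / mu1 + 1 / mu2)) 0)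
    (hne : lam * (1 + alpha / gam) * (1 / mu1 + 1 / mu2) ≠ 1)
    (hker : ∀ᶠ z in nhdsWithin 1 (Set.Iio (1 : ℝ)),
      hstar (lam * (1 - z) + alpha - alpha * rstar (lam * (1 - z))) ≠ z)
    (hlim : Filter.Tendsto
      (fun z : ℝ =>
        hstar (lam * (1 - z) + alpha - alpha * rstar (lam * (1 - z))) * (1 - z) * p0
          / (hstar (lam * (1 - z) + alpha - alpha * rstar (lam * (1 - z))) - z))
      (nhdsWithin 1 (Set.Iio (1 : ℝ))) (nhds 1)) :
    p0 = 1 - lam * (1 + alpha / gam) * (1 / mu1 + 1 / mu2) := by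
  set ρ : ℝ := lam * (1 + alpha / gam) * (1 / mu1 + 1 / mu2) with hρ
  set φ : ℝ → ℝ := fun z => lam * (1 - z) + alpha - alpha * rstar (lam * (1 - z)) with hφ
  set g : ℝ → ℝ := fun z => hstar (φ z) with hg
  have hφ1 : φ 1 = 0 := by simp [hφ, hr0]
  have hg1 : g 1 = 1 := by simp [hg, hφ1, hh0]
  -- derivative of the inner function lam*(1-z) at 1
  have hinner : HasDerivAt (fun z : ℝ => lam * (1 - z)) (-lam) 1 := by
    simpa using ((hasDerivAt_id (1:ℝ)).const_sub 1).const_mul lam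
  have hrcomp : HasDerivAt (fun z : ℝ => rstar (lam * (1 - z))) ((-(1/gam)) * (-lam)) 1 := by
    have hr'' : HasDerivAt rstar (-(1 / gam)) (lam * (1 - 1)) := by
      rw [show lam * (1 - (1:ℝ)) = 0 by ring]; exact hr'
    exact hr''.comp 1 hinner
  have hφ' : HasDerivAt φ (-(lam * (1 + alpha / gam))) 1 := by
    have h := (hinner.add_const alpha).sub (hrcomp.const_mul alpha)
    refine h.congr_deriv ?_
    field_simp; ring
  have hg' : HasDerivAt g ρ 1 := by
    have hh'' : HasDerivAt hstar (-(1 / mu1 + 1 / mu2)) (φ 1) := by rw [hφ1]; exact hh'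
    have h := hh''.comp 1 hφ'
    refine h.congr_deriv ?_
    rw [hρ]; ring
  -- slope tendsto
  have hslope : Tendsto (fun z => (g z - 1) / (z - 1)) (nhdsWithin 1 (Set.Iio (1:ℝ))) (𝓝 ρ) := by
    have := hasDerivAt_iff_tendsto_slope.mp hg'
    have hmono : nhdsWithin (1:ℝ) (Set.Iio 1) ≤ nhdsWithin 1 {(1:ℝ)}ᶜ :=
      nhdsWithin_mono _ (fun x hx => ne_of_lt hx)
    have := this.mono_left hmono
    refine this.congr (fun z => ?_)
    simp [slope, hg1, div_eq_inv_mul]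
  -- F z := (g z - z)/(1 - z) tends to 1 - ρ
  have hF : Tendsto (fun z => (g z - z) / (1 - z)) (nhdsWithin 1 (Set.Iio (1:ℝ))) (𝓝 (1 - ρ)) := by
    have h1 : Tendsto (fun z => 1 - (g z - 1) / (z - 1)) (nhdsWithin 1 (Set.Iio (1:ℝ)))
        (𝓝 (1 - ρ)) := tendsto_const_nhds.sub hslope
    refine h1.congr' ?_
    filter_upwards [self_mem_nhdsWithin] with z hz
    have hz1 : (1:ℝ) - z ≠ 0 := by
      have : z < 1 := hz
      linarith
    have hz1' : z - (1:ℝ) ≠ 0 := by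
      have : z < 1 := hz
      linarith
    field_simp
    ring
  -- g tends to 1
  have hgc : Tendsto g (nhdsWithin 1 (Set.Iio (1:ℝ))) (𝓝 1) := by
    have := hg'.continuousAt.continuousWithinAt (s := Set.Iio (1:ℝ))
    simpa [ContinuousWithinAt, hg1] using this
  -- the PGF equals g z * p0 / F z
  have hPF : Tendsto
      (fun z : ℝ => g z * (1 - z) * p0 / (g z - z))
      (nhdsWithin 1 (Set.Iio (1:ℝ))) (𝓝 (1 * p0 / (1 - ρ))) := by
    have hdiv : Tendsto (fun z => g z * p0 / ((g z - z) / (1 - z)))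
        (nhdsWithin 1 (Set.Iio (1:ℝ))) (𝓝 (1 * p0 / (1 - ρ))) :=
      (hgc.mul tendsto_const_nhds).div hF (by simpa using sub_ne_zero.mpr (Ne.symm hne))
    refine hdiv.congr' ?_
    filter_upwards [self_mem_nhdsWithin, hker] with z hz hk
    have hz1 : (1:ℝ) - z ≠ 0 := by
      have : z < 1 := hz; linarith
    have hk' : g z - z ≠ 0 := sub_ne_zero.mpr hk
    rw [div_div_eq_mul_div]
    ring
  have huniq : 1 * p0 / (1 - ρ) = 1 := tendsto_nhds_unique hPF hlim
  have h1ρ : (1:ℝ) - ρ ≠ 0 := sub_ne_zero.mpr (Ne.symm hne)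
  field_simp at huniq
  linarith
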